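/- Let (Ω, F, P) be a probability space with filtration (F_ℓ)_{ℓ≥0}, and let X_1, …, X_T be a martingale difference sequence with respect to (F_ℓ) (i.e., each X_ℓ is F_ℓ-measurable and E[X_ℓ | F_{ℓ−1}] = 0 almost surely) satisfying |X_ℓ| ≤ R almost surely for all ℓ. Then for any δ′ ∈ (0,1) and any η ∈ (0, 1/R), with probability at least 1 − δ′, Σ_{ℓ=1}^T X_ℓ ≤ η·Σ_{ℓ=1}^T E[X_ℓ² | F_{ℓ−1}] + log(1/δ′)/η. -/

import Mathlib

open MeasureTheory ProbabilityTheory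

lemma exp_le_quadratic {t : ℝ} (ht : |t| ≤ 1) : Real.exp t ≤ 1 + t + t ^ 2 := by
  have h := Real.exp_bound ht (n := 2) (by norm_num)
  have hsum : ∑ m ∈ Finset.range 2, t ^ m / m.factorial = 1 + t := by
    simp [Finset.sum_range_succ]
  rw [hsum] at h
  have h2 : Real.exp t - (1 + t) ≤ |t| ^ 2 * (3 / (2 * 2)) := by
    have := abs_le.mp h
    refine this.2.trans (le_of_eq ?_)
    norm_num [Nat.factorial]
  nlinarith [sq_abs t, sq_nonneg t]

lemma sum_Icc_one_succ {M : Type*} [AddCommMonoid M] (f : ℕ → M) (n : ℕ) :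
    ∑ ℓ ∈ Finset.Icc 1 (n + 1), f ℓ = (∑ ℓ ∈ Finset.Icc 1 n, f ℓ) + f (n + 1) := by
  have h1 : Finset.Icc 1 (n + 1) = Finset.Ioc 0 (n + 1) := Finset.Icc_succ_left_eq_Ioc 0 (n + 1)
  have h2 : Finset.Icc 1 n = Finset.Ioc 0 n := Finset.Icc_succ_left_eq_Ioc 0 n
  rw [h1, h2, Finset.sum_Ioc_succ_top (Nat.zero_le n)]

/-- Simplified Freedman's inequality: for a martingale difference sequence `X_1, …, X_T`
with `|X_ℓ| ≤ R` a.s., any `δ' ∈ (0,1)` and `η ∈ (0, 1/R)`, with probability at least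
`1 − δ'`, `Σ_{ℓ=1}^T X_ℓ ≤ η·Σ_{ℓ=1}^T E[X_ℓ² | F_{ℓ−1}] + log(1/δ')/η`. -/
theorem stmt_6 (Ω : Type) [m0 : MeasurableSpace Ω] (P : Measure Ω) [IsProbabilityMeasure P]
    (𝓕 : Filtration ℕ m0) (T : ℕ) (R : ℝ) (X : ℕ → Ω → ℝ)
    (hadapted : ∀ ℓ, StronglyMeasurable[𝓕 ℓ] (X ℓ))
    (hint : ∀ ℓ, Integrable (X ℓ) P)
    (hmds : ∀ ℓ, 1 ≤ ℓ → P[X ℓ | 𝓕 (ℓ - 1)] =ᵐ[P] 0)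
    (hbdd : ∀ ℓ, ∀ᵐ ω ∂P, |X ℓ ω| ≤ R)
    (δ' η : ℝ) (hδ0 : 0 < δ') (hδ1 : δ' < 1) (hη0 : 0 < η) (hη1 : η < 1 / R) :
    ENNReal.ofReal (1 - δ') ≤
      P {ω | ∑ ℓ ∈ Finset.Icc 1 T, X ℓ ω ≤
        η * ∑ ℓ ∈ Finset.Icc 1 T, (P[fun ω' => (X ℓ ω') ^ 2 | 𝓕 (ℓ - 1)]) ω +
          Real.log (1 / δ') / η} := by
  have hR : 0 < R := one_div_pos.mp (hη0.trans hη1)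
  have hηR : η * R < 1 := (lt_div_iff₀ hR).mp hη1
  set C : ℕ → Ω → ℝ := fun ℓ => P[fun ω' => (X ℓ ω') ^ 2 | 𝓕 (ℓ - 1)] with hC
  set S : ℕ → Ω → ℝ := fun n ω => ∑ ℓ ∈ Finset.Icc 1 n, X ℓ ω with hS
  set V : ℕ → Ω → ℝ := fun n ω => ∑ ℓ ∈ Finset.Icc 1 n, C ℓ ω with hV
  set M : ℕ → Ω → ℝ := fun n ω => Real.exp (η * S n ω - η ^ 2 * V n ω) with hM
  -- basic measurability
  have hXm : ∀ ℓ, Measurable (X ℓ) := fun ℓ => ((hadapted ℓ).measurable).mono (𝓕.le ℓ) le_rfl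
  have hCm : ∀ ℓ, Measurable (C ℓ) := fun ℓ =>
    (stronglyMeasurable_condExp.measurable).mono (𝓕.le _) le_rfl
  have hMm : ∀ n, Measurable (M n) := by
    intro n
    simp only [hM, hS, hV]
    exact ((measurable_const.mul (Finset.measurable_sum _ fun ℓ _ => hXm ℓ)).sub
      (measurable_const.mul (Finset.measurable_sum _ fun ℓ _ => hCm ℓ))).exp
  -- a.e. facts
  have hball : ∀ᵐ ω ∂P, ∀ ℓ, |X ℓ ω| ≤ R := ae_all_iff.mpr hbdd
  have hCnonneg : ∀ ℓ, ∀ᵐ ω ∂P, 0 ≤ C ℓ ω := fun ℓ =>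
    condExp_nonneg (ae_of_all _ fun ω => sq_nonneg _)
  have hCall : ∀ᵐ ω ∂P, ∀ ℓ, 0 ≤ C ℓ ω := ae_all_iff.mpr hCnonneg
  -- integrability of M n
  have hMint : ∀ n, Integrable (M n) P := by
    intro n
    refine (integrable_const (Real.exp (η * (n * R)))).mono' (hMm n).aestronglyMeasurable ?_
    filter_upwards [hball, hCall] with ω hb hc
    have hSle : S n ω ≤ n * R := by
      simp only [hS]
      calc ∑ ℓ ∈ Finset.Icc 1 n, X ℓ ω ≤ ∑ ℓ ∈ Finset.Icc 1 n, R :=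
            Finset.sum_le_sum fun ℓ _ => (abs_le.mp (hb ℓ)).2
        _ = n * R := by
            rw [Finset.sum_const, Nat.card_Icc]
            simp [nsmul_eq_mul]
    have hVnn : 0 ≤ V n ω := Finset.sum_nonneg fun ℓ _ => hc ℓ
    have hle : M n ω ≤ Real.exp (η * (n * R)) := by
      simp only [hM]
      apply Real.exp_le_exp.mpr
      nlinarith [mul_le_mul_of_nonneg_left hSle hη0.le, mul_nonneg (sq_nonneg η) hVnn]
    have hpos : 0 < M n ω := Real.exp_pos _
    rw [Real.norm_eq_abs, abs_of_pos hpos]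
    exact hle
  -- integrability of X^2
  have hX2int : ∀ ℓ, Integrable (fun ω => (X ℓ ω) ^ 2) P := by
    intro ℓ
    refine (integrable_const (R ^ 2)).mono' ((hXm ℓ).pow_const 2).aestronglyMeasurable ?_
    filter_upwards [hbdd ℓ] with ω h
    rw [Real.norm_eq_abs, abs_pow]
    exact pow_le_pow_left₀ (abs_nonneg _) h 2
  -- integrability of exp(η X ℓ)
  have hexpint : ∀ ℓ, Integrable (fun ω => Real.exp (η * X ℓ ω)) P := by
    intro ℓ
    refine (integrable_const (Real.exp (η * R))).mono'
      ((measurable_const.mul (hXm ℓ)).exp).aestronglyMeasurable ?_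
    filter_upwards [hbdd ℓ] with ω h
    rw [Real.norm_eq_abs, abs_of_pos (Real.exp_pos _)]
    exact Real.exp_le_exp.mpr (mul_le_mul_of_nonneg_left ((abs_le.mp h).2) hη0.le)
  -- pointwise quadratic bound
  have hpt : ∀ ℓ, ∀ᵐ ω ∂P,
      Real.exp (η * X ℓ ω) ≤ 1 + η * X ℓ ω + η ^ 2 * (X ℓ ω) ^ 2 := by
    intro ℓ
    filter_upwards [hbdd ℓ] with ω h
    have ht : |η * X ℓ ω| ≤ 1 := by
      rw [abs_mul, abs_of_pos hη0]
      nlinarith [abs_nonneg (X ℓ ω)]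
    calc Real.exp (η * X ℓ ω) ≤ 1 + η * X ℓ ω + (η * X ℓ ω) ^ 2 := exp_le_quadratic ht
      _ = 1 + η * X ℓ ω + η ^ 2 * (X ℓ ω) ^ 2 := by ring
  -- conditional expectation bound
  have hcond : ∀ n, P[(fun ω => Real.exp (η * X (n + 1) ω)) | 𝓕 n]
      ≤ᵐ[P] fun ω => Real.exp (η ^ 2 * C (n + 1) ω) := by
    intro n
    have hq : (fun ω => 1 + η * X (n + 1) ω + η ^ 2 * (X (n + 1) ω) ^ 2)
        = (fun _ => (1 : ℝ)) + η • X (n + 1) + η ^ 2 • (fun ω => (X (n + 1) ω) ^ 2) := by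
      funext ω; simp [smul_eq_mul]
    have hqint : Integrable (fun ω => 1 + η * X (n + 1) ω + η ^ 2 * (X (n + 1) ω) ^ 2) P := by
      exact ((integrable_const (1 : ℝ)).add ((hint (n + 1)).const_mul η)).add
        ((hX2int (n + 1)).const_mul (η ^ 2))
    have h1 := condExp_mono (m := 𝓕 n) (hexpint (n + 1)) hqint (hpt (n + 1))
    have h2 : P[fun ω => 1 + η * X (n + 1) ω + η ^ 2 * (X (n + 1) ω) ^ 2 | 𝓕 n]
        =ᵐ[P] fun ω => 1 + η ^ 2 * C (n + 1) ω := by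
      rw [hq]
      have ha := condExp_add (m := 𝓕 n) (μ := P)
        ((integrable_const (1 : ℝ)).add ((hint (n + 1)).smul η))
        ((hX2int (n + 1)).smul (η ^ 2))
      have hb := condExp_add (m := 𝓕 n) (μ := P)
        (integrable_const (1 : ℝ)) ((hint (n + 1)).smul η)
      have hc1 := condExp_smul (m := 𝓕 n) (μ := P) η (X (n + 1))
      have hc2 := condExp_smul (m := 𝓕 n) (μ := P) (η ^ 2) (fun ω => (X (n + 1) ω) ^ 2)
      have hmds' : P[X (n + 1) | 𝓕 n] =ᵐ[P] 0 := hmds (n + 1) (Nat.le_add_left 1 n)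
      have hcondC : P[(fun ω => (X (n + 1) ω) ^ 2) | 𝓕 n] = C (n + 1) := by
        simp only [hC, Nat.add_sub_cancel]
      have hconst : P[(fun _ => (1 : ℝ)) | 𝓕 n] = fun _ => (1 : ℝ) :=
        condExp_const (𝓕.le n) 1
      filter_upwards [ha, hb, hc1, hc2, hmds'] with ω e1 e2 e3 e4 e5
      simp only [Pi.add_apply, Pi.smul_apply, smul_eq_mul, Pi.zero_apply] at *
      rw [e1, e2, e3, e4, e5, hconst, hcondC]
      ring
    calc P[(fun ω => Real.exp (η * X (n + 1) ω)) | 𝓕 n]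
        ≤ᵐ[P] P[fun ω => 1 + η * X (n + 1) ω + η ^ 2 * (X (n + 1) ω) ^ 2 | 𝓕 n] := h1
      _ =ᵐ[P] fun ω => 1 + η ^ 2 * C (n + 1) ω := h2
      _ ≤ᵐ[P] fun ω => Real.exp (η ^ 2 * C (n + 1) ω) := ae_of_all _ fun ω => by
          have := Real.add_one_le_exp (η ^ 2 * C (n + 1) ω)
          dsimp only
          linarith
  -- the supermartingale bound on the integral
  have key : ∀ n, ∫ ω, M n ω ∂P ≤ 1 := by
    intro n
    induction n with
    | zero =>
      have : M 0 = fun _ => (1 : ℝ) := by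
        funext ω
        simp [hM, hS, hV, show Finset.Icc 1 0 = (∅ : Finset ℕ) from rfl]
      rw [this]
      simp
    | succ n ih =>
      set G : Ω → ℝ := fun ω => Real.exp (η * S n ω - η ^ 2 * V (n + 1) ω) with hG
      have hGsm : StronglyMeasurable[𝓕 n] G := by
        apply Measurable.stronglyMeasurable
        simp only [hG, hS, hV]
        apply Measurable.exp
        apply Measurable.sub
        · exact measurable_const.mul (Finset.measurable_sum _ fun ℓ hℓ =>
            ((hadapted ℓ).measurable).mono (𝓕.mono (Finset.mem_Icc.mp hℓ).2) le_rfl)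
        · exact measurable_const.mul (Finset.measurable_sum _ fun ℓ hℓ =>
            (stronglyMeasurable_condExp.measurable).mono
              (𝓕.mono (by
                have := (Finset.mem_Icc.mp hℓ).2
                omega)) le_rfl)
      have hSsucc : ∀ ω, S (n + 1) ω = S n ω + X (n + 1) ω := by
        intro ω
        simp only [hS]
        exact sum_Icc_one_succ (fun ℓ => X ℓ ω) n
      have hVsucc : ∀ ω, V (n + 1) ω = V n ω + C (n + 1) ω := by
        intro ω
        simp only [hV]
        exact sum_Icc_one_succ (fun ℓ => C ℓ ω) n
      have hMeq : M (n + 1) = fun ω => G ω * Real.exp (η * X (n + 1) ω) := by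
        funext ω
        simp only [hM, hG]
        rw [← Real.exp_add, hSsucc ω]
        congr 1
        ring
      have hGXint : Integrable (fun ω => G ω * Real.exp (η * X (n + 1) ω)) P :=
        hMeq ▸ hMint (n + 1)
      have step1 : P[M (n + 1) | 𝓕 n]
          =ᵐ[P] G * P[(fun ω => Real.exp (η * X (n + 1) ω)) | 𝓕 n] := by
        rw [hMeq]
        exact condExp_mul_of_stronglyMeasurable_left hGsm hGXint (hexpint (n + 1))
      have step2 : G * P[(fun ω => Real.exp (η * X (n + 1) ω)) | 𝓕 n] ≤ᵐ[P] M n := by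
        filter_upwards [hcond n] with ω h
        simp only [Pi.mul_apply]
        have hGpos : 0 ≤ G ω := (Real.exp_pos _).le
        calc G ω * (P[(fun ω => Real.exp (η * X (n + 1) ω)) | 𝓕 n]) ω
            ≤ G ω * Real.exp (η ^ 2 * C (n + 1) ω) := mul_le_mul_of_nonneg_left h hGpos
          _ = M n ω := by
              simp only [hG, hM]
              rw [← Real.exp_add]
              congr 1
              rw [hVsucc ω]
              ring
      calc ∫ ω, M (n + 1) ω ∂P = ∫ ω, (P[M (n + 1) | 𝓕 n]) ω ∂P :=
            (integral_condExp (𝓕.le n)).symm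
        _ ≤ ∫ ω, M n ω ∂P :=
            integral_mono_ae integrable_condExp (hMint n) (step1.le.trans step2)
        _ ≤ 1 := ih
  -- Markov's inequality
  set L := Real.log (1 / δ') with hL
  have hMnonneg : 0 ≤ᵐ[P] M T := ae_of_all _ fun ω => (Real.exp_pos _).le
  have hmarkov := mul_meas_ge_le_integral_of_nonneg hMnonneg (hMint T) (1 / δ')
  have hPle : P {x | 1 / δ' ≤ M T x} ≤ ENNReal.ofReal δ' := by
    rw [ENNReal.le_ofReal_iff_toReal_le (measure_ne_top _ _) hδ0.le]
    have h1 : (1 / δ') * (P {x | 1 / δ' ≤ M T x}).toReal ≤ 1 := hmarkov.trans (key T)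
    have h2 : δ' * (1 / δ') = 1 := mul_one_div_cancel hδ0.ne'
    nlinarith [ENNReal.toReal_nonneg (a := P {x | 1 / δ' ≤ M T x})]
  -- inclusion of complements
  set E : Set Ω := {ω | S T ω ≤ η * V T ω + L / η} with hE
  have hsub : Eᶜ ⊆ {x | 1 / δ' ≤ M T x} := by
    intro ω hω
    simp only [hE, Set.mem_compl_iff, Set.mem_setOf_eq, not_le] at hω
    have hcan : L / η * η = L := div_mul_cancel₀ L hη0.ne'
    have h1 : L < η * S T ω - η ^ 2 * V T ω := by nlinarith
    have h2 : (1 : ℝ) / δ' = Real.exp L := (Real.exp_log (by positivity)).symm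
    simp only [Set.mem_setOf_eq, hM]
    rw [h2]
    exact (Real.exp_lt_exp.mpr h1).le
  have huniv : (1 : ENNReal) ≤ P E + ENNReal.ofReal δ' := by
    calc (1 : ENNReal) = P Set.univ := measure_univ.symm
      _ = P (E ∪ Eᶜ) := by rw [Set.union_compl_self]
      _ ≤ P E + P Eᶜ := measure_union_le _ _
      _ ≤ P E + ENNReal.ofReal δ' := by
          exact add_le_add (le_refl _) ((measure_mono hsub).trans hPle)
  have hfinal : ENNReal.ofReal (1 - δ') ≤ P E := by
    rw [ENNReal.ofReal_sub _ hδ0.le, ENNReal.ofReal_one]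
    exact tsub_le_iff_right.mpr huniv
  exact hfinal
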